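/- For all x > 0, sinh³(x) > x³ cosh(x). -/

import Mathlib

open Real

private lemma deriv_chain {f f' : ℝ → ℝ} (hd : ∀ t, HasDerivAt f (f' t) t)
    (hf' : ∀ t, 0 ≤ t → 0 ≤ f' t) {x : ℝ} (hx : 0 ≤ x) : f 0 ≤ f x := by
  have H : MonotoneOn f (Set.Ici (0:ℝ)) := by
    apply monotoneOn_of_deriv_nonneg (convex_Ici 0)
    · exact fun t _ => (hd t).continuousAt.continuousWithinAt
    · exact fun t _ => (hd t).differentiableAt.differentiableWithinAt
    · intro t ht
      rw [interior_Ici, Set.mem_Ioi] at ht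
      rw [(hd t).deriv]
      exact hf' t ht.le
  exact H Set.self_mem_Ici hx hx

/- Upper bound chain -/
private lemma L1 {t : ℝ} (ht : 0 ≤ t) : Real.sinh t ≤ t * Real.cosh t := by
  have h := deriv_chain (f := fun y => y * Real.cosh y - Real.sinh y)
      (f' := fun y => y * Real.sinh y)
      (fun y => by
        have h := ((hasDerivAt_id y).mul (Real.hasDerivAt_cosh y)).sub (Real.hasDerivAt_sinh y)
        exact h.congr_deriv (by simp [id_eq]))
      (fun y hy => mul_nonneg hy (Real.sinh_nonneg_iff.2 hy)) ht
  simp at h; linarith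

private lemma L2 {t : ℝ} (ht : 0 ≤ t) : Real.cosh t ≤ 1 + t^2/2 * Real.cosh t := by
  have h := deriv_chain (f := fun y => 1 + y^2/2 * Real.cosh y - Real.cosh y)
      (f' := fun y => (y * Real.cosh y - Real.sinh y) + y^2/2 * Real.sinh y)
      (fun y => by
        have h := (hasDerivAt_const y (1:ℝ)).add
          ((((hasDerivAt_pow 2 y).div_const 2).mul (Real.hasDerivAt_cosh y)))
        have h2 := h.sub (Real.hasDerivAt_cosh y)
        exact h2.congr_deriv (by ring))
      (fun y hy => add_nonneg (by linarith [L1 hy])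
        (mul_nonneg (by positivity) (Real.sinh_nonneg_iff.2 hy))) ht
  simp at h; linarith

private lemma L3 {t : ℝ} (ht : 0 ≤ t) : Real.sinh t ≤ t + t^3/6 * Real.cosh t := by
  have h := deriv_chain (f := fun y => y + y^3/6 * Real.cosh y - Real.sinh y)
      (f' := fun y => (1 + y^2/2 * Real.cosh y - Real.cosh y) + y^3/6 * Real.sinh y)
      (fun y => by
        have h := ((hasDerivAt_id y).add
          (((hasDerivAt_pow 3 y).div_const 6).mul (Real.hasDerivAt_cosh y))).sub
          (Real.hasDerivAt_sinh y)
        exact h.congr_deriv (by ring))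
      (fun y hy => add_nonneg (by linarith [L2 hy])
        (mul_nonneg (by positivity) (Real.sinh_nonneg_iff.2 hy))) ht
  simp at h; linarith

private lemma L4 {t : ℝ} (ht : 0 ≤ t) : Real.cosh t ≤ 1 + t^2/2 + t^4/24 * Real.cosh t := by
  have h := deriv_chain (f := fun y => 1 + y^2/2 + y^4/24 * Real.cosh y - Real.cosh y)
      (f' := fun y => (y + y^3/6 * Real.cosh y - Real.sinh y) + y^4/24 * Real.sinh y)
      (fun y => by
        have h := (((hasDerivAt_const y (1:ℝ)).add ((hasDerivAt_pow 2 y).div_const 2)).add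
          (((hasDerivAt_pow 4 y).div_const 24).mul (Real.hasDerivAt_cosh y))).sub
          (Real.hasDerivAt_cosh y)
        exact h.congr_deriv (by ring))
      (fun y hy => add_nonneg (by linarith [L3 hy])
        (mul_nonneg (by positivity) (Real.sinh_nonneg_iff.2 hy))) ht
  simp at h; linarith

private lemma L5 {t : ℝ} (ht : 0 ≤ t) :
    Real.sinh t ≤ t + t^3/6 + t^5/120 * Real.cosh t := by
  have h := deriv_chain (f := fun y => y + y^3/6 + y^5/120 * Real.cosh y - Real.sinh y)
      (f' := fun y => (1 + y^2/2 + y^4/24 * Real.cosh y - Real.cosh y) + y^5/120 * Real.sinh y)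
      (fun y => by
        have h := (((hasDerivAt_id y).add ((hasDerivAt_pow 3 y).div_const 6)).add
          (((hasDerivAt_pow 5 y).div_const 120).mul (Real.hasDerivAt_cosh y))).sub
          (Real.hasDerivAt_sinh y)
        exact h.congr_deriv (by ring))
      (fun y hy => add_nonneg (by linarith [L4 hy])
        (mul_nonneg (by positivity) (Real.sinh_nonneg_iff.2 hy))) ht
  simp at h; linarith

private lemma L6 {t : ℝ} (ht : 0 ≤ t) :
    Real.cosh t ≤ 1 + t^2/2 + t^4/24 + t^6/720 * Real.cosh t := by
  have h := deriv_chain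
      (f := fun y => 1 + y^2/2 + y^4/24 + y^6/720 * Real.cosh y - Real.cosh y)
      (f' := fun y => (y + y^3/6 + y^5/120 * Real.cosh y - Real.sinh y) + y^6/720 * Real.sinh y)
      (fun y => by
        have h := ((((hasDerivAt_const y (1:ℝ)).add ((hasDerivAt_pow 2 y).div_const 2)).add
          ((hasDerivAt_pow 4 y).div_const 24)).add
          (((hasDerivAt_pow 6 y).div_const 720).mul (Real.hasDerivAt_cosh y))).sub
          (Real.hasDerivAt_cosh y)
        exact h.congr_deriv (by ring))
      (fun y hy => add_nonneg (by linarith [L5 hy])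
        (mul_nonneg (by positivity) (Real.sinh_nonneg_iff.2 hy))) ht
  simp at h; linarith

/- Lower bound chain -/
private lemma M2 {t : ℝ} (ht : 0 ≤ t) : 1 + t^2/2 ≤ Real.cosh t := by
  have h := deriv_chain (f := fun y => Real.cosh y - (1 + y^2/2))
      (f' := fun y => Real.sinh y - y)
      (fun y => by
        have h := (Real.hasDerivAt_cosh y).sub
          ((hasDerivAt_const y (1:ℝ)).add ((hasDerivAt_pow 2 y).div_const 2))
        exact h.congr_deriv (by ring))
      (fun y hy => sub_nonneg.2 (Real.self_le_sinh_iff.2 hy)) ht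
  simp at h; linarith

private lemma M3 {t : ℝ} (ht : 0 ≤ t) : t + t^3/6 ≤ Real.sinh t := by
  have h := deriv_chain (f := fun y => Real.sinh y - (y + y^3/6))
      (f' := fun y => Real.cosh y - (1 + y^2/2))
      (fun y => by
        have h := (Real.hasDerivAt_sinh y).sub
          ((hasDerivAt_id y).add ((hasDerivAt_pow 3 y).div_const 6))
        exact h.congr_deriv (by ring))
      (fun y hy => sub_nonneg.2 (M2 hy)) ht
  simp at h; linarith

private lemma M4 {t : ℝ} (ht : 0 ≤ t) : 1 + t^2/2 + t^4/24 ≤ Real.cosh t := by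
  have h := deriv_chain (f := fun y => Real.cosh y - (1 + y^2/2 + y^4/24))
      (f' := fun y => Real.sinh y - (y + y^3/6))
      (fun y => by
        have h := (Real.hasDerivAt_cosh y).sub
          (((hasDerivAt_const y (1:ℝ)).add ((hasDerivAt_pow 2 y).div_const 2)).add
            ((hasDerivAt_pow 4 y).div_const 24))
        exact h.congr_deriv (by ring))
      (fun y hy => sub_nonneg.2 (M3 hy)) ht
  simp at h; linarith

private lemma M5 {t : ℝ} (ht : 0 ≤ t) : t + t^3/6 + t^5/120 ≤ Real.sinh t := by
  have h := deriv_chain (f := fun y => Real.sinh y - (y + y^3/6 + y^5/120))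
      (f' := fun y => Real.cosh y - (1 + y^2/2 + y^4/24))
      (fun y => by
        have h := (Real.hasDerivAt_sinh y).sub
          (((hasDerivAt_id y).add ((hasDerivAt_pow 3 y).div_const 6)).add
            ((hasDerivAt_pow 5 y).div_const 120))
        exact h.congr_deriv (by ring))
      (fun y hy => sub_nonneg.2 (M4 hy)) ht
  simp at h; linarith

private lemma M6 {t : ℝ} (ht : 0 ≤ t) : 1 + t^2/2 + t^4/24 + t^6/720 ≤ Real.cosh t := by
  have h := deriv_chain (f := fun y => Real.cosh y - (1 + y^2/2 + y^4/24 + y^6/720))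
      (f' := fun y => Real.sinh y - (y + y^3/6 + y^5/120))
      (fun y => by
        have h := (Real.hasDerivAt_cosh y).sub
          ((((hasDerivAt_const y (1:ℝ)).add ((hasDerivAt_pow 2 y).div_const 2)).add
            ((hasDerivAt_pow 4 y).div_const 24)).add ((hasDerivAt_pow 6 y).div_const 720))
        exact h.congr_deriv (by ring))
      (fun y hy => sub_nonneg.2 (M5 hy)) ht
  simp at h; linarith

private lemma M7 {t : ℝ} (ht : 0 ≤ t) :
    t + t^3/6 + t^5/120 + t^7/5040 ≤ Real.sinh t := by
  have h := deriv_chain (f := fun y => Real.sinh y - (y + y^3/6 + y^5/120 + y^7/5040))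
      (f' := fun y => Real.cosh y - (1 + y^2/2 + y^4/24 + y^6/720))
      (fun y => by
        have h := (Real.hasDerivAt_sinh y).sub
          ((((hasDerivAt_id y).add ((hasDerivAt_pow 3 y).div_const 6)).add
            ((hasDerivAt_pow 5 y).div_const 120)).add ((hasDerivAt_pow 7 y).div_const 5040))
        exact h.congr_deriv (by ring))
      (fun y hy => sub_nonneg.2 (M6 hy)) ht
  simp at h; linarith

private lemma key_poly {x : ℝ} (hx : 0 < x) (hx2 : x ≤ 2) :
    720 * x^3 * (1 + x^2/2 + x^4/24) <
      (x + x^3/6 + x^5/120 + x^7/5040)^3 * (720 - x^6) := by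
  nlinarith [sq_nonneg x, pow_pos hx 2, pow_pos hx 4, pow_pos hx 6,
    mul_nonneg (mul_nonneg hx.le hx.le) hx.le, sq_nonneg (x^2 - 4),
    mul_nonneg (sub_nonneg.2 (by nlinarith : x^2 ≤ 4)) (pow_pos hx 8).le,
    mul_nonneg (sub_nonneg.2 (by nlinarith : x^2 ≤ 4)) (pow_pos hx 12).le,
    mul_nonneg (sub_nonneg.2 (by nlinarith : x^2 ≤ 4)) (pow_pos hx 16).le,
    mul_nonneg (sub_nonneg.2 (by nlinarith : x^2 ≤ 4)) (pow_pos hx 20).le,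
    mul_nonneg (sub_nonneg.2 (by nlinarith : x^2 ≤ 4)) (pow_pos hx 24).le]

/-- For all `x > 0`, `sinh³ x > x³ cosh x`. -/
theorem sinh_cubed_gt_cube_mul_cosh (x : ℝ) (hx : 0 < x) :
    Real.sinh x ^ 3 > x ^ 3 * Real.cosh x := by
  have hs : 0 < Real.sinh x := Real.sinh_pos_iff.2 hx
  have hc : 0 < Real.cosh x := Real.cosh_pos x
  rcases le_total x 2 with h2 | h2
  · -- small case
    have hM := M7 hx.le
    have hL := L6 hx.le
    have hx6 : x^6 ≤ 64 := by nlinarith [pow_le_pow_left₀ hx.le h2 6]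
    have hp : 0 < x + x^3/6 + x^5/120 + x^7/5040 := by positivity
    have hs3 : (x + x^3/6 + x^5/120 + x^7/5040)^3 ≤ Real.sinh x ^ 3 :=
      pow_le_pow_left₀ hp.le hM 3
    have hkey := key_poly hx h2
    have hcc : Real.cosh x * (720 - x^6) ≤ 720 * (1 + x^2/2 + x^4/24) := by nlinarith
    have hpos : (0:ℝ) < 720 - x^6 := by linarith
    have hfin : x ^ 3 * Real.cosh x * (720 - x^6) < Real.sinh x ^ 3 * (720 - x^6) := by
      have hA : x^3 * (Real.cosh x * (720 - x^6)) ≤ x^3 * (720 * (1 + x^2/2 + x^4/24)) :=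
        mul_le_mul_of_nonneg_left hcc (by positivity)
      have hB : (x + x^3/6 + x^5/120 + x^7/5040)^3 * (720 - x^6) ≤
          Real.sinh x ^ 3 * (720 - x^6) := mul_le_mul_of_nonneg_right hs3 hpos.le
      nlinarith
    exact (mul_lt_mul_iff_of_pos_right hpos).1 hfin
  · -- large case : cosh x < sinh x + 1 ≤ (4/3) sinh x
    have h1 : Real.cosh x - Real.sinh x ≤ 1 := by
      rw [Real.cosh_sub_sinh]
      exact Real.exp_le_one_iff.2 (by linarith)
    have hM := M3 hx.le
    have hx3 : (8:ℝ) ≤ x^3 := by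
      have := pow_le_pow_left₀ (by norm_num : (0:ℝ) ≤ 2) h2 3
      norm_num at this; linarith
    have hs3 : 3 < Real.sinh x := by linarith
    have hc4 : Real.cosh x ≤ 4/3 * Real.sinh x := by linarith
    have h2s : 4/3 * x^3 < Real.sinh x ^ 2 := by
      nlinarith [sq_nonneg (x - 2), mul_nonneg (sub_nonneg.2 h2) (sq_nonneg (x-2)),
        mul_nonneg (mul_nonneg (sub_nonneg.2 h2) (sub_nonneg.2 h2)) (sq_nonneg x)]
    nlinarith [mul_lt_mul_of_pos_left h2s hs, mul_le_mul_of_nonneg_left hc4 (by positivity : (0:ℝ) ≤ x^3)]
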